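/- (Proposition 3.5) Let 𝔯 be a solvable Lie algebra and let i ≠ 0 be an ideal of 𝔯. Then i ∩ 𝔞(𝔯) ≠ 0, where 𝔞(𝔯) = z(𝔯₀) + z(𝔯₁) + ⋯ + z(𝔯_k). -/

import Mathlib

/-- The center `z(I) = {x ∈ I : ⁅x, y⁆ = 0 for all y ∈ I}` of an ideal `I` of a Lie
algebra, as a submodule of the ambient Lie algebra. -/
def lieIdealCenter {K : Type*} [Field K] {L : Type*} [LieRing L] [LieAlgebra K L]
    (I : LieIdeal K L) : Submodule K L where
  carrier := {x : L | x ∈ I ∧ ∀ y ∈ I, ⁅x, y⁆ = 0}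
  add_mem' := by
    rintro a b ⟨haI, ha⟩ ⟨hbI, hb⟩
    exact ⟨I.add_mem haI hbI, fun y hy => by rw [add_lie, ha y hy, hb y hy, add_zero]⟩
  zero_mem' := ⟨I.zero_mem, fun y _ => zero_lie y⟩
  smul_mem' := by
    rintro t a ⟨haI, ha⟩
    exact ⟨I.smul_mem t haI, fun y hy => by rw [smul_lie, ha y hy, smul_zero]⟩

/-- (Proposition 3.5) If `𝔯` is a solvable Lie algebra and `I ≠ 0` is an ideal of `𝔯`,
then `I ∩ 𝔞(𝔯) ≠ 0`, where `𝔞(𝔯) = z(𝔯₀) + z(𝔯₁) + ⋯ + z(𝔯_k)`. -/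
theorem ideal_inf_a_r_ne_bot
    {K : Type*} [Field K] {L : Type*} [LieRing L] [LieAlgebra K L]
    [LieAlgebra.IsSolvable L] (k : ℕ)
    (hk : LieAlgebra.derivedSeries K L k ≠ ⊥)
    (hk1 : LieAlgebra.derivedSeries K L (k + 1) = ⊥)
    (I : LieIdeal K L) (hI : I ≠ ⊥) :
    ((I : Submodule K L) ⊓
      ∑ i ∈ Finset.range (k + 1), lieIdealCenter (LieAlgebra.derivedSeries K L i)) ≠ ⊥ := by
  classical
  set D := LieAlgebra.derivedSeries K L with hD
  let P : ℕ → Prop := fun j => I ⊓ D j = ⊥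
  have hPk : P (k + 1) := by
    show I ⊓ D (k + 1) = ⊥
    rw [hk1]; simp
  have hex : ∃ n, P n := ⟨k + 1, hPk⟩
  set m := Nat.find hex with hm
  have hm_spec : I ⊓ D m = ⊥ := Nat.find_spec hex
  have hm_le : m ≤ k + 1 := Nat.find_le hPk
  have hm_pos : 0 < m := by
    rcases Nat.eq_zero_or_pos m with h0 | h
    · exfalso
      have : P 0 := h0 ▸ hm_spec
      simp only [P, LieAlgebra.derivedSeries_def, LieAlgebra.derivedSeriesOfIdeal_zero,
        inf_top_eq, hD] at this
      exact hI this
    · exact h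
  set j := m - 1 with hj
  have hjm : j + 1 = m := Nat.succ_pred_eq_of_pos hm_pos
  have hjk : j ≤ k := by omega
  have hne : ¬ P j := Nat.find_min hex (by omega)
  have hsucc : I ⊓ D (j + 1) = ⊥ := hjm ▸ hm_spec
  -- get a nonzero element of I ⊓ D j
  have : ∃ x ∈ I ⊓ D j, x ≠ 0 := by
    by_contra h
    push_neg at h
    exact hne ((LieSubmodule.eq_bot_iff _).mpr h)
  obtain ⟨x, hx, hx0⟩ := this
  rw [LieSubmodule.mem_inf] at hx
  obtain ⟨hxI, hxD⟩ := hx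
  have hxc : x ∈ lieIdealCenter (D j) := by
    refine ⟨hxD, fun y hy => ?_⟩
    have h1 : ⁅x, y⁆ ∈ I := by rw [← lie_skew]; exact neg_mem (I.lie_mem hxI)
    have h2 : ⁅x, y⁆ ∈ D (j + 1) := by
      rw [hD, LieAlgebra.derivedSeries_def, LieAlgebra.derivedSeriesOfIdeal_succ,
        ← LieAlgebra.derivedSeries_def]
      exact LieSubmodule.lie_mem_lie hxD hy
    have : ⁅x, y⁆ ∈ I ⊓ D (j + 1) := (LieSubmodule.mem_inf _ _ _).mpr ⟨h1, h2⟩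
    rw [hsucc] at this
    exact this
  have hle : lieIdealCenter (D j) ≤
      ∑ i ∈ Finset.range (k + 1), lieIdealCenter (D i) :=
    Finset.single_le_sum (f := fun i => lieIdealCenter (D i)) (fun i _ => bot_le)
      (Finset.mem_range.mpr (Nat.lt_succ_of_le hjk))
  rw [Submodule.ne_bot_iff]
  exact ⟨x, Submodule.mem_inf.mpr ⟨hxI, hle hxc⟩, hx0⟩
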